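/- Let G be an (n−4)-regular graph on n vertices (the complement of a 3-regular graph H). If H has an independent set of size tn with t ≥ δ_h = 95/194, then G admits a partition into two clusters with modularity at least 2(4δ_h² − δ_h)/(n−4). -/

import Mathlib

open Finset

/-- Modularity of a set of vertices `C` of a graph `G`. -/
noncomputable def setMod {V : Type*} [Fintype V] [DecidableEq V]
    (G : SimpleGraph V) [DecidableRel G.Adj] (C : Finset V) : ℝ :=
  (1 / (2 * (G.edgeFinset.card : ℝ))) *
    ∑ u ∈ C, ∑ v ∈ C,
      ((if G.Adj u v then (1 : ℝ) else 0)
        - (G.degree u : ℝ) * (G.degree v : ℝ) / (2 * (G.edgeFinset.card : ℝ)))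

/-- For a symmetric kernel with zero row sums, the double sum over a set equals
the double sum over its complement. -/
lemma sum_sum_compl_eq {V : Type*} [Fintype V] [DecidableEq V] (f : V → V → ℝ)
    (hsymm : ∀ u v, f u v = f v u) (hrow : ∀ u, ∑ v, f u v = 0) (C : Finset V) :
    ∑ u ∈ Cᶜ, ∑ v ∈ Cᶜ, f u v = ∑ u ∈ C, ∑ v ∈ C, f u v := by
  have hrow' : ∀ u, ∑ v ∈ C, f u v + ∑ v ∈ Cᶜ, f u v = 0 := fun u => by
    rw [Finset.sum_add_sum_compl]; exact hrow u
  have h1 : ∑ u ∈ C, (∑ v ∈ C, f u v + ∑ v ∈ Cᶜ, f u v) = 0 := by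
    simp [hrow']
  have h2 : ∑ u ∈ Cᶜ, (∑ v ∈ C, f u v + ∑ v ∈ Cᶜ, f u v) = 0 := by
    simp [hrow']
  rw [Finset.sum_add_distrib] at h1 h2
  have h3 : ∑ u ∈ Cᶜ, ∑ v ∈ C, f u v = ∑ u ∈ C, ∑ v ∈ Cᶜ, f u v := by
    rw [Finset.sum_comm]
    exact Finset.sum_congr rfl fun v _ => Finset.sum_congr rfl fun u _ => hsymm u v
  linarith

/-- Completeness: let `H` be a 3-regular graph on `n` vertices and `G = Hᶜ` its
complement, an `(n−4)`-regular graph.  If `H` has an independent set `V'` of size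
`t·n` with `t ≥ δ_h = 95/194`, then the two-cluster partition `{V', V∖V'}` of `G`
has modularity at least `2(4δ_h² − δ_h)/(n−4)`. -/
theorem completeness_independent_set
    {V : Type*} [Fintype V] [DecidableEq V] (H : SimpleGraph V)
    [DecidableRel H.Adj] [DecidableRel Hᶜ.Adj]
    (n : ℕ) (hn : Fintype.card V = n) (hn4 : 4 < n)
    (hreg : H.IsRegularOfDegree 3)
    (t : ℝ) (ht : (95 : ℝ) / 194 ≤ t)
    (V' : Finset V) (hcard : (V'.card : ℝ) = t * n)
    (hind : ∀ u ∈ V', ∀ v ∈ V', u ≠ v → ¬ H.Adj u v) :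
    setMod Hᶜ V' + setMod Hᶜ V'ᶜ
      ≥ 2 * (4 * ((95 : ℝ) / 194) ^ 2 - (95 : ℝ) / 194) / ((n : ℝ) - 4) := by
  classical
  set N : ℝ := (n : ℝ) with hN
  have hN4 : (4 : ℝ) < N := by rw [hN]; exact_mod_cast hn4
  have hNpos : (0 : ℝ) < N := by linarith
  have hdpos : (0 : ℝ) < N - 4 := by linarith
  -- degrees in the complement
  have hdegN : ∀ v : V, Hᶜ.degree v = n - 4 := by
    intro v
    have h1 := H.degree_compl v
    rw [hn, hreg v] at h1
    omega
  have hdeg : ∀ v : V, (Hᶜ.degree v : ℝ) = N - 4 := by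
    intro v
    rw [hdegN v, Nat.cast_sub (by omega)]
    norm_num
    exact hN.symm
  -- edge count
  have h2M : 2 * (Hᶜ.edgeFinset.card : ℝ) = N * (N - 4) := by
    have hsum := Hᶜ.sum_degrees_eq_twice_card_edges
    have : ∑ v : V, Hᶜ.degree v = n * (n - 4) := by
      simp only [hdegN, Finset.sum_const, smul_eq_mul, Finset.card_univ, hn]
    rw [this] at hsum
    have : ((n * (n - 4) : ℕ) : ℝ) = N * (N - 4) := by
      rw [Nat.cast_mul, Nat.cast_sub (by omega)]
      norm_num
      rw [hN]
    rw [← this, hsum]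
    push_cast
    ring
  set M : ℝ := (Hᶜ.edgeFinset.card : ℝ) with hM
  have h2Mpos : (0 : ℝ) < 2 * M := by rw [h2M]; positivity
  have h2Mne : 2 * M ≠ 0 := ne_of_gt h2Mpos
  -- the modularity kernel
  set f : V → V → ℝ := fun u v =>
    (if Hᶜ.Adj u v then (1 : ℝ) else 0)
      - (Hᶜ.degree u : ℝ) * (Hᶜ.degree v : ℝ) / (2 * M) with hf
  have hsymm : ∀ u v, f u v = f v u := by
    intro u v
    simp only [hf, Hᶜ.adj_comm u v, mul_comm]
  have hrow : ∀ u, ∑ v, f u v = 0 := by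
    intro u
    simp only [hf]
    rw [Finset.sum_sub_distrib, Finset.sum_boole]
    have hfil : (Finset.univ.filter fun v => Hᶜ.Adj u v).card = Hᶜ.degree u := by
      rw [← SimpleGraph.neighborFinset_eq_filter]
      rfl
    have hdsum : ∑ v : V, (Hᶜ.degree u : ℝ) * (Hᶜ.degree v : ℝ) / (2 * M)
        = (Hᶜ.degree u : ℝ) * (N * (N - 4)) / (2 * M) := by
      rw [← Finset.sum_div, ← Finset.mul_sum]
      congr 2
      calc ∑ v : V, (Hᶜ.degree v : ℝ) = ∑ v : V, (N - 4) := by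
            exact Finset.sum_congr rfl fun v _ => hdeg v
        _ = N * (N - 4) := by
            rw [Finset.sum_const, Finset.card_univ, hn, nsmul_eq_mul]
    rw [hfil, hdsum, ← h2M]
    field_simp
    have hM0 : M ≠ 0 := fun h => by simp [h] at h2Mpos
    rw [div_self hM0]; ring
  -- complement sum equals the sum over V'
  have hcompl := sum_sum_compl_eq f hsymm hrow V'
  -- compute the sum over V'
  set s : ℝ := (V'.card : ℝ) with hs
  have hinner : ∀ u ∈ V', ∑ v ∈ V', f u v = (s - 1) - s * ((N - 4) * (N - 4) / (2 * M)) := by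
    intro u hu
    have hterm : ∀ v ∈ V', f u v
        = (1 - if u = v then (1 : ℝ) else 0) - (N - 4) * (N - 4) / (2 * M) := by
      intro v hv
      simp only [hf, hdeg]
      congr 1
      by_cases huv : u = v
      · simp [huv]
      · have : Hᶜ.Adj u v := by
          rw [SimpleGraph.compl_adj]
          exact ⟨huv, hind u hu v hv huv⟩
        simp [this, huv]
    rw [Finset.sum_congr rfl hterm, Finset.sum_sub_distrib, Finset.sum_sub_distrib,
      Finset.sum_const, Finset.sum_ite_eq, if_pos hu, Finset.sum_const]
    simp [hs]
  have hS1 : ∑ u ∈ V', ∑ v ∈ V', f u v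
      = s * ((s - 1) - s * ((N - 4) * (N - 4) / (2 * M))) := by
    rw [Finset.sum_congr rfl hinner, Finset.sum_const, nsmul_eq_mul, hs]
  -- express both setMods
  have hmods : setMod Hᶜ V' = (4 * t ^ 2 - t) / (N - 4) ∧
      setMod Hᶜ V'ᶜ = (4 * t ^ 2 - t) / (N - 4) := by
    have hset : ∀ C : Finset V, setMod Hᶜ C = (1 / (2 * M)) * ∑ u ∈ C, ∑ v ∈ C, f u v := by
      intro C; rfl
    have hval : (1 / (2 * M)) * (s * ((s - 1) - s * ((N - 4) * (N - 4) / (2 * M))))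
        = (4 * t ^ 2 - t) / (N - 4) := by
      rw [h2M, hcard]
      field_simp
      ring
    constructor
    · rw [hset, hS1, hval]
    · rw [hset, hcompl, hS1, hval]
  rw [hmods.1, hmods.2]
  rw [ge_iff_le, ← add_div, div_le_div_iff₀ hdpos hdpos]
  have h1 : 0 ≤ t - 95 / 194 := by linarith
  have h2 : (0 : ℝ) ≤ 4 * t + 4 * (95 / 194) - 1 := by nlinarith
  nlinarith [mul_nonneg h1 h2, sq_nonneg (N - 4)]
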